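/- With M_2 = (1/2) Σ_{i+j≥2, i,j≥1} q_i q_j (i+j-2) ∂/∂q_{i+j-2} + (1/2) Σ_{i,j≥1} q_{i+j+2} i j ∂²/(∂q_i ∂q_j) (where the term with i+j-2 = 0 is understood as absent) and Λ_1 = Σ_{i≥2} (i-1) q_i ∂/∂q_{i-1}, the operators commute: [M_2, Λ_1] = 0. -/

import Mathlib

open MvPolynomial

/-- Λ₁ = Σ_{i≥2} (i-1) q_i ∂/∂q_{i-1}, reindexed by i = j+1. -/
noncomputable def Lam1 (f : MvPolynomial ℕ ℚ) : MvPolynomial ℕ ℚ :=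
  ∑ᶠ j : ℕ, (j : ℚ) • (X (j + 1) * pderiv j f)

/-- M_a = ½ Σ_{i,j≥1, i+j-a≥1} (i+j-a) q_i q_j ∂/∂q_{i+j-a}
        + ½ Σ_{i,j≥1} i j q_{i+j+a} ∂²/∂q_i∂q_j. -/
noncomputable def M (a : ℕ) (f : MvPolynomial ℕ ℚ) : MvPolynomial ℕ ℚ :=
  (1 / 2 : ℚ) •
    ((∑ᶠ i : ℕ, ∑ᶠ j : ℕ,
        if 1 ≤ i ∧ 1 ≤ j ∧ 1 ≤ i + j - a then
          ((i + j - a : ℕ) : ℚ) • (X i * X j * pderiv (i + j - a) f)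
        else 0) +
      (∑ᶠ i : ℕ, ∑ᶠ j : ℕ,
        ((i : ℚ) * (j : ℚ)) • (X (i + j + a) * pderiv i (pderiv j f))))


open Finset

private abbrev P : Type := MvPolynomial ℕ ℚ

private lemma pd_comm (i j : ℕ) (f : P) :
    pderiv i (pderiv j f) = pderiv j (pderiv i f) := by
  induction f using MvPolynomial.induction_on' with
  | add p q hp hq => simp only [map_add, hp, hq]
  | monomial s a =>
    rcases eq_or_ne i j with rfl | hij
    · rfl
    · simp only [pderiv_monomial]
      rw [tsub_right_comm]
      congr 1
      simp [Finsupp.sub_apply, Finsupp.single_apply, hij, Ne.symm hij]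
      ring

private lemma exists_bound (f : P) : ∃ N, ∀ k, N ≤ k → pderiv k f = 0 := by
  refine ⟨(f.vars.sup id) + 1, fun k hk => pderiv_eq_zero_of_notMem_vars fun hm => ?_⟩
  have := Finset.le_sup (f := id) hm
  simp only [id] at this
  omega

private lemma lam1_eq (g : P) (Cb : ℕ) (h : ∀ k, Cb ≤ k → pderiv k g = 0) :
    Lam1 g = ∑ m ∈ range Cb, (m : ℚ) • (X (m+1) * pderiv m g) := by
  rw [Lam1]
  apply finsum_eq_sum_of_support_subset
  intro m hm
  simp only [Function.mem_support] at hm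
  simp only [coe_range, Set.mem_Iio]
  by_contra hx
  exact hm (by rw [h m (by omega)]; simp)

private lemma M_eq (g : P) (Cb : ℕ) (h : ∀ k, Cb ≤ k → pderiv k g = 0) :
    M 2 g = (1/2 : ℚ) •
      ((∑ i ∈ range (Cb+1), ∑ j ∈ range (Cb+1),
        if 1 ≤ i ∧ 1 ≤ j ∧ 1 ≤ i + j - 2 then
          ((i + j - 2 : ℕ) : ℚ) • (X i * X j * pderiv (i + j - 2) g)
        else 0) +
      (∑ i ∈ range (Cb+1), ∑ j ∈ range (Cb+1),
        ((i : ℚ) * (j : ℚ)) • (X (i + j + 2) * pderiv i (pderiv j g)))) := by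
  rw [M]
  congr 1
  congr 1
  · -- first double finsum
    have h1 : ∀ i : ℕ, (∑ᶠ j : ℕ, if 1 ≤ i ∧ 1 ≤ j ∧ 1 ≤ i + j - 2 then
          ((i + j - 2 : ℕ) : ℚ) • (X i * X j * pderiv (i + j - 2) g) else 0)
        = ∑ j ∈ range (Cb+1), if 1 ≤ i ∧ 1 ≤ j ∧ 1 ≤ i + j - 2 then
          ((i + j - 2 : ℕ) : ℚ) • (X i * X j * pderiv (i + j - 2) g) else 0 := by
      intro i
      apply finsum_eq_sum_of_support_subset
      intro j hj
      simp only [Function.mem_support] at hj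
      simp only [coe_range, Set.mem_Iio]
      by_contra hx
      apply hj
      split_ifs with hc
      · rw [h (i + j - 2) (by omega)]; simp
      · rfl
    rw [finsum_congr h1]
    apply finsum_eq_sum_of_support_subset
    intro i hi
    simp only [Function.mem_support] at hi
    simp only [coe_range, Set.mem_Iio]
    by_contra hx
    apply hi
    apply Finset.sum_eq_zero
    intro j _
    split_ifs with hc
    · rw [h (i + j - 2) (by omega)]; simp
    · rfl
  · have h1 : ∀ i : ℕ, (∑ᶠ j : ℕ, ((i : ℚ) * (j : ℚ)) • (X (i + j + 2) * pderiv i (pderiv j g)))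
        = ∑ j ∈ range (Cb+1), ((i : ℚ) * (j : ℚ)) • (X (i + j + 2) * pderiv i (pderiv j g)) := by
      intro i
      apply finsum_eq_sum_of_support_subset
      intro j hj
      simp only [Function.mem_support] at hj
      simp only [coe_range, Set.mem_Iio]
      by_contra hx
      exact hj (by rw [h j (by omega)]; simp)
    rw [finsum_congr h1]
    apply finsum_eq_sum_of_support_subset
    intro i hi
    simp only [Function.mem_support] at hi
    simp only [coe_range, Set.mem_Iio]
    by_contra hx
    apply hi
    apply Finset.sum_eq_zero
    intro j _
    rw [pd_comm, h i (by omega)]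
    simp


private lemma sum_shift_ite (n k : ℕ) (g : ℕ → P)
    (h : ∀ m, m + 1 = k → ¬ m < n → g m = 0) :
    (∑ m ∈ range n, if m + 1 = k then g m else 0) = if 1 ≤ k then g (k-1) else 0 := by
  rw [Finset.sum_eq_single (k-1)]
  · rcases Nat.eq_zero_or_pos k with rfl | hk
    · simp
    · rw [if_pos (show k - 1 + 1 = k by omega), if_pos (show 1 ≤ k by omega)]
  · intro b _ hb
    rw [if_neg (by omega)]
  · intro hb
    simp only [mem_range, not_lt] at hb
    split_ifs with hc
    · exact h _ hc (by omega)
    · rfl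

private lemma key1 (f : P) (N : ℕ) (hf : ∀ k, N ≤ k → pderiv k f = 0)
    (Cb : ℕ) (hC : N ≤ Cb) (k : ℕ) :
    pderiv k (Lam1 f) = ((k-1 : ℕ) : ℚ) • pderiv (k-1) f
      + ∑ m ∈ range Cb, (m : ℚ) • (X (m+1) * pderiv k (pderiv m f)) := by
  rw [lam1_eq f Cb (fun j hj => hf j (by omega)), map_sum]
  have e1 : ∀ m ∈ range Cb,
      pderiv k ((m : ℚ) • (X (m+1) * pderiv m f))
        = (if m + 1 = k then (m:ℚ) • pderiv m f else 0)
          + (m : ℚ) • (X (m+1) * pderiv k (pderiv m f)) := by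
    intro m _
    rw [Derivation.map_smul, pderiv_mul, pderiv_X, Pi.single_apply]
    split_ifs with hc
    · rw [one_mul, smul_add]
    · rw [zero_mul, smul_add, zero_add, smul_zero, zero_add]
  rw [Finset.sum_congr rfl e1, Finset.sum_add_distrib]
  congr 1
  rw [sum_shift_ite _ _ _ (fun m hm hmn => by rw [hf m (by omega)]; simp)]
  rcases Nat.eq_zero_or_pos k with rfl | hk
  · simp
  · rw [if_pos (show 1 ≤ k by omega)]

private lemma key2 (f : P) (N : ℕ) (hf : ∀ k, N ≤ k → pderiv k f = 0)
    (Cb : ℕ) (hC : N ≤ Cb) (i k : ℕ) :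
    pderiv i (pderiv k (Lam1 f)) =
      ((k-1 : ℕ) : ℚ) • pderiv i (pderiv (k-1) f)
      + ((i-1 : ℕ) : ℚ) • pderiv k (pderiv (i-1) f)
      + ∑ m ∈ range Cb, (m : ℚ) • (X (m+1) * pderiv i (pderiv k (pderiv m f))) := by
  rw [key1 f N hf Cb hC k, map_add, Derivation.map_smul, map_sum, add_assoc]
  congr 1
  have e1 : ∀ m ∈ range Cb,
      pderiv i ((m : ℚ) • (X (m+1) * pderiv k (pderiv m f)))
        = (if m + 1 = i then (m:ℚ) • pderiv k (pderiv m f) else 0)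
          + (m : ℚ) • (X (m+1) * pderiv i (pderiv k (pderiv m f))) := by
    intro m _
    rw [Derivation.map_smul, pderiv_mul, pderiv_X, Pi.single_apply]
    split_ifs with hc
    · rw [one_mul, smul_add]
    · rw [zero_mul, smul_add, zero_add, smul_zero, zero_add]
  rw [Finset.sum_congr rfl e1, Finset.sum_add_distrib]
  congr 1
  rw [sum_shift_ite _ _ _ (fun m hm hmn => by rw [hf m (by omega)]; simp)]
  rcases Nat.eq_zero_or_pos i with rfl | hk
  · simp
  · rw [if_pos (show 1 ≤ i by omega)]

private lemma ite_sum {c : Prop} [Decidable c] {s : Finset ℕ} (v : ℕ → P) :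
    (if c then ∑ j ∈ s, v j else 0) = ∑ j ∈ s, (if c then v j else 0) := by
  split_ifs <;> simp

private lemma smul_congr {q r : ℚ} {x y : P} (h1 : q = r) (h2 : x = y) : q • x = r • y := by
  rw [h1, h2]

private lemma pderiv_term (m i j : ℕ) (q : ℚ) (g : P) :
    pderiv m (q • (X i * X j * g)) = (if i = m then q • (X j * g) else 0)
      + (if j = m then q • (X i * g) else 0) + q • (X i * X j * pderiv m g) := by
  rw [Derivation.map_smul, pderiv_mul, pderiv_mul]
  simp only [pderiv_X, Pi.single_apply]
  split_ifs with h1 h2 h2 <;> simp [add_mul, smul_add]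

private lemma pderiv_term1 (m i : ℕ) (q : ℚ) (g : P) :
    pderiv m (q • (X i * g)) = (if i = m then q • g else 0) + q • (X i * pderiv m g) := by
  rw [Derivation.map_smul, pderiv_mul]
  simp only [pderiv_X, Pi.single_apply]
  split_ifs with h1 <;> simp [smul_add]

private lemma keyDA (f : P) (c : ℕ) (m : ℕ) (hm : m < c) :
    pderiv m (∑ i ∈ range (c+1), ∑ j ∈ range (c+1),
        if 1 ≤ i ∧ 1 ≤ j ∧ 1 ≤ i + j - 2 then
          ((i + j - 2 : ℕ) : ℚ) • (X i * X j * pderiv (i + j - 2) f) else 0)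
    = (∑ j ∈ range (c+1), if 1 ≤ m ∧ 1 ≤ j ∧ 1 ≤ m + j - 2 then
          ((m + j - 2 : ℕ) : ℚ) • (X j * pderiv (m + j - 2) f) else 0)
      + (∑ i ∈ range (c+1), if 1 ≤ i ∧ 1 ≤ m ∧ 1 ≤ i + m - 2 then
          ((i + m - 2 : ℕ) : ℚ) • (X i * pderiv (i + m - 2) f) else 0)
      + ∑ i ∈ range (c+1), ∑ j ∈ range (c+1),
          (if 1 ≤ i ∧ 1 ≤ j ∧ 1 ≤ i + j - 2 then
            ((i + j - 2 : ℕ) : ℚ) • (X i * X j * pderiv m (pderiv (i + j - 2) f)) else 0) := by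
  rw [map_sum]
  have e1 : ∀ i ∈ range (c+1),
      pderiv m (∑ j ∈ range (c+1), if 1 ≤ i ∧ 1 ≤ j ∧ 1 ≤ i + j - 2 then
          ((i + j - 2 : ℕ) : ℚ) • (X i * X j * pderiv (i + j - 2) f) else 0)
      = (if i = m then (∑ j ∈ range (c+1), if 1 ≤ m ∧ 1 ≤ j ∧ 1 ≤ m + j - 2 then
          ((m + j - 2 : ℕ) : ℚ) • (X j * pderiv (m + j - 2) f) else 0) else 0)
        + (∑ j ∈ range (c+1), if j = m then (if 1 ≤ i ∧ 1 ≤ m ∧ 1 ≤ i + m - 2 then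
          ((i + m - 2 : ℕ) : ℚ) • (X i * pderiv (i + m - 2) f) else 0) else 0)
        + ∑ j ∈ range (c+1), (if 1 ≤ i ∧ 1 ≤ j ∧ 1 ≤ i + j - 2 then
            ((i + j - 2 : ℕ) : ℚ) • (X i * X j * pderiv m (pderiv (i + j - 2) f)) else 0) := by
    intro i _
    rw [map_sum, ite_sum, ← Finset.sum_add_distrib, ← Finset.sum_add_distrib]
    apply Finset.sum_congr rfl
    intro j _
    by_cases hcond : 1 ≤ i ∧ 1 ≤ j ∧ 1 ≤ i + j - 2
    · rw [if_pos hcond, pderiv_term, if_pos hcond]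
      congr 2
      · by_cases h2 : i = m
        · subst h2; rw [if_pos rfl, if_pos rfl, if_pos hcond]
        · rw [if_neg h2, if_neg h2]
      · by_cases h3 : j = m
        · subst h3; rw [if_pos rfl, if_pos rfl, if_pos hcond]
        · rw [if_neg h3, if_neg h3]
    · rw [if_neg hcond, map_zero]
      have z1 : (if i = m then (if 1 ≤ m ∧ 1 ≤ j ∧ 1 ≤ m + j - 2 then
          ((m + j - 2 : ℕ) : ℚ) • (X j * pderiv (m + j - 2) f) else 0) else 0) = 0 := by
        by_cases h2 : i = m
        · subst h2; rw [if_pos rfl, if_neg hcond]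
        · rw [if_neg h2]
      have z2 : (if j = m then (if 1 ≤ i ∧ 1 ≤ m ∧ 1 ≤ i + m - 2 then
          ((i + m - 2 : ℕ) : ℚ) • (X i * pderiv (i + m - 2) f) else 0) else 0) = 0 := by
        by_cases h3 : j = m
        · subst h3; rw [if_pos rfl, if_neg hcond]
        · rw [if_neg h3]
      rw [z1, z2, if_neg hcond, add_zero, add_zero]
  rw [Finset.sum_congr rfl e1, Finset.sum_add_distrib, Finset.sum_add_distrib]
  congr 1
  congr 1
  · rw [Finset.sum_ite_eq' (range (c+1)) m, if_pos (by simp; omega)]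
  · apply Finset.sum_congr rfl
    intro i _
    rw [Finset.sum_ite_eq' (range (c+1)) m, if_pos (by simp; omega)]

private lemma keyDB (f : P) (c m : ℕ) :
    pderiv m (∑ i ∈ range (c+1), ∑ j ∈ range (c+1),
        ((i:ℚ)*(j:ℚ)) • (X (i+j+2) * pderiv i (pderiv j f)))
    = (∑ i ∈ range (c+1), ∑ j ∈ range (c+1),
        if i+j+2 = m then ((i:ℚ)*(j:ℚ)) • pderiv i (pderiv j f) else 0)
      + ∑ i ∈ range (c+1), ∑ j ∈ range (c+1),
        ((i:ℚ)*(j:ℚ)) • (X (i+j+2) * pderiv m (pderiv i (pderiv j f))) := by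
  rw [map_sum, ← Finset.sum_add_distrib]
  apply Finset.sum_congr rfl
  intro i _
  rw [map_sum, ← Finset.sum_add_distrib]
  apply Finset.sum_congr rfl
  intro j _
  rw [pderiv_term1]

private lemma Md_vanish (f : P) (N : ℕ) (hf : ∀ k, N ≤ k → pderiv k f = 0)
    (c : ℕ) (hc : 2*N+4 ≤ c) (k : ℕ) (hk : c ≤ k) : pderiv k (M 2 f) = 0 := by
  rw [M_eq f c (fun t ht => hf t (by omega)), Derivation.map_smul, map_add]
  have hA : pderiv k (∑ i ∈ range (c+1), ∑ j ∈ range (c+1),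
      if 1 ≤ i ∧ 1 ≤ j ∧ 1 ≤ i + j - 2 then
        ((i + j - 2 : ℕ) : ℚ) • (X i * X j * pderiv (i + j - 2) f) else 0) = 0 := by
    rw [map_sum]
    apply Finset.sum_eq_zero; intro i _
    rw [map_sum]
    apply Finset.sum_eq_zero; intro j _
    by_cases hcond : 1 ≤ i ∧ 1 ≤ j ∧ 1 ≤ i + j - 2
    · rw [if_pos hcond]
      by_cases hN : N ≤ i + j - 2
      · rw [hf _ hN]; simp
      · rw [pderiv_term, if_neg (by omega), if_neg (by omega),
          pd_comm, hf k (by omega)]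
        simp
    · rw [if_neg hcond, map_zero]
  have hB : pderiv k (∑ i ∈ range (c+1), ∑ j ∈ range (c+1),
      ((i:ℚ)*(j:ℚ)) • (X (i+j+2) * pderiv i (pderiv j f))) = 0 := by
    rw [map_sum]
    apply Finset.sum_eq_zero; intro i hi
    rw [map_sum]
    apply Finset.sum_eq_zero; intro j hj
    simp only [mem_range] at hi hj
    by_cases hjN : N ≤ j
    · rw [hf _ hjN]; simp
    · by_cases hiN : N ≤ i
      · rw [pd_comm i j, hf _ hiN]; simp
      · rw [pderiv_term1, if_neg (by omega), pd_comm k i, pd_comm k j, hf k (by omega)]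
        simp
  rw [hA, hB]
  simp

private lemma Ld_vanish (f : P) (N : ℕ) (hf : ∀ k, N ≤ k → pderiv k f = 0)
    (c : ℕ) (hc : 2*N+4 ≤ c) (k : ℕ) (hk : c ≤ k) : pderiv k (Lam1 f) = 0 := by
  rw [key1 f N hf c (by omega) k, hf (k-1) (by omega)]
  simp only [smul_zero, zero_add]
  apply Finset.sum_eq_zero; intro m _
  rw [pd_comm, hf k (by omega)]
  simp

private lemma iteAddZero {c : Prop} [Decidable c] (x y : P) :
    (if c then x + y else 0) = (if c then x else 0) + (if c then y else 0) := by
  split_ifs <;> simp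

-- standalone dev of the involution step
private lemma keyinv (f : P) (N : ℕ) (hf : ∀ k, N ≤ k → pderiv k f = 0) (c : ℕ) (hc : 2*N+4 ≤ c)
    (a r : ℕ → ℕ → P)
    (ha : a = fun (i j : ℕ) =>
      if 1 ≤ i+1 ∧ 1 ≤ j ∧ 1 ≤ (i+1) + j - 2 then
        (((i+1) + j - 2 : ℕ) : ℚ) • (X (i+1) * X j * ((((i+1) + j - 2 - 1 : ℕ) : ℚ) •
          pderiv ((i+1) + j - 2 - 1) f))
      else 0)
    (hr : r = fun (i j : ℕ) =>
      if 1 ≤ i ∧ 1 ≤ j ∧ 1 ≤ i + j - 2 then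
        (i:ℚ) • (X (i+1) * (((i + j - 2 : ℕ) : ℚ) • (X j * pderiv (i + j - 2) f)))
      else 0) :
    ∑ p ∈ range c ×ˢ range (c+1), (a p.1 p.2 - (r p.1 p.2 + r p.1 p.2)) = 0 := by
  -- the pointwise pair identity
  have main : ∀ i j : ℕ, 1 ≤ j →
      (a i j - (r i j + r i j)) + (a (j-1) (i+1) - (r (j-1) (i+1) + r (j-1) (i+1))) = 0 := by
    intro i j hj
    subst ha hr
    simp only
    rw [show (j-1)+1 = j from by omega]
    rw [show (i+1) + j - 2 = i + j - 1 from by omega]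
    rw [show j + (i+1) - 2 = i + j - 1 from by omega]
    rw [show i + j - 1 - 1 = i + j - 2 from by omega]
    rw [show (j-1) + (i+1) - 2 = i + j - 2 from by omega]
    by_cases h2 : 1 ≤ i + j - 1
    · rw [if_pos (show 1 ≤ i+1 ∧ 1 ≤ j ∧ 1 ≤ i+j-1 from ⟨by omega, hj, h2⟩),
          if_pos (show 1 ≤ j ∧ 1 ≤ i+1 ∧ 1 ≤ i+j-1 from ⟨hj, by omega, h2⟩)]
      have e1 : ((i + j - 1 : ℕ) : ℚ) = (i:ℚ) + (j:ℚ) - 1 := by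
        rw [Nat.cast_sub (by omega)]; push_cast; ring
      by_cases hrc : 1 ≤ i ∧ 1 ≤ j ∧ 1 ≤ i + j - 2
      · rw [if_pos hrc]
        have e2 : ((i + j - 2 : ℕ) : ℚ) = (i:ℚ) + (j:ℚ) - 2 := by
          rw [Nat.cast_sub (by omega)]; push_cast; ring
        by_cases hrc' : 1 ≤ j-1 ∧ 1 ≤ i+1 ∧ 1 ≤ i + j - 2
        · rw [if_pos hrc']
          have e3 : ((j - 1 : ℕ) : ℚ) = (j:ℚ) - 1 := by
            rw [Nat.cast_sub (by omega)]; push_cast; ring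
          simp only [mul_smul_comm, smul_smul, ← mul_assoc]
          rw [mul_comm (X j) (X (i+1))]
          rw [e1, e2, e3]
          module
        · -- r' condition fails : j = 1
          rw [if_neg hrc']
          have ej : (j:ℚ) = 1 := by
            have : j = 1 := by omega
            rw [this]; norm_num
          simp only [mul_smul_comm, smul_smul, ← mul_assoc]
          rw [mul_comm (X j) (X (i+1))]
          rw [e1, e2, ej]
          module
      · rw [if_neg hrc]
        by_cases hrc' : 1 ≤ j-1 ∧ 1 ≤ i+1 ∧ 1 ≤ i + j - 2
        · -- r condition fails : i = 0
          rw [if_pos hrc']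
          have e2 : ((i + j - 2 : ℕ) : ℚ) = (i:ℚ) + (j:ℚ) - 2 := by
            rw [Nat.cast_sub (by omega)]; push_cast; ring
          have e3 : ((j - 1 : ℕ) : ℚ) = (j:ℚ) - 1 := by
            rw [Nat.cast_sub (by omega)]; push_cast; ring
          have ei : (i:ℚ) = 0 := by
            have : i = 0 := by omega
            rw [this]; norm_num
          simp only [mul_smul_comm, smul_smul, ← mul_assoc]
          rw [mul_comm (X j) (X (i+1))]
          rw [e1, e2, e3, ei]
          module
        · -- both fail : i + j = 2
          rw [if_neg hrc']
          have : i + j - 2 = 0 := by omega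
          rw [this]
          norm_num
    · -- i = 0, j = 1 : everything vanishes
      rw [if_neg (fun h => by omega), if_neg (fun h => by omega),
        if_neg (fun h => by omega), if_neg (fun h => by omega)]
      norm_num
  -- zero on the j = 0 line
  have z0 : ∀ i : ℕ, a i 0 - (r i 0 + r i 0) = 0 := by
    intro i
    subst ha hr
    simp only
    rw [if_neg (fun h => by omega), if_neg (fun h => by omega)]
    norm_num
  have zdiag : ∀ i : ℕ, a i (i+1) - (r i (i+1) + r i (i+1)) = 0 := by
    intro i
    subst ha hr
    simp only
    by_cases hi : 1 ≤ i
    · rw [show (i+1) + (i+1) - 2 = 2*i from by omega]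
      rw [show 2*i - 1 = i + (i+1) - 2 from by omega]
      rw [if_pos (show 1 ≤ i+1 ∧ 1 ≤ i+1 ∧ 1 ≤ 2*i from ⟨by omega, by omega, by omega⟩),
          if_pos (show 1 ≤ i ∧ 1 ≤ i+1 ∧ 1 ≤ i+(i+1)-2 from ⟨by omega, by omega, by omega⟩)]
      have eA : ((2*i : ℕ) : ℚ) = 2*(i:ℚ) := by push_cast; ring
      have eB : ((i + (i+1) - 2 : ℕ) : ℚ) = 2*(i:ℚ) - 1 := by
        rw [Nat.cast_sub (by omega)]; push_cast; ring
      simp only [mul_smul_comm, smul_smul, ← mul_assoc]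
      rw [eA, eB]
      module
    · rw [if_neg (fun h => by omega), if_neg (fun h => by omega)]
      norm_num
  apply Finset.sum_involution
    (g := fun p _ => if p.2 = 0 then p else (p.2 - 1, p.1 + 1))
  case hg₁ =>
    intro p hp
    by_cases h0 : p.2 = 0
    · rw [if_pos h0, h0, z0 p.1]
      norm_num
    · rw [if_neg h0]
      exact main p.1 p.2 (by omega)
  case hg₃ =>
    intro p hp hne
    by_cases h0 : p.2 = 0
    · exfalso
      apply hne
      rw [h0, z0 p.1]
    · rw [if_neg h0]
      intro hEq
      apply hne
      have h2 : p.1 + 1 = p.2 := congrArg Prod.snd hEq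
      rw [← h2]
      exact zdiag p.1
  case g_mem =>
    intro p hp
    simp only [Finset.mem_product, Finset.mem_range] at hp ⊢
    by_cases h0 : p.2 = 0
    · rw [if_pos h0]; simp [Finset.mem_product, Finset.mem_range, hp.1, hp.2]
    · rw [if_neg h0]; simp only [Finset.mem_product, Finset.mem_range]; omega
  case hg₄ =>
    intro p hp
    by_cases h0 : p.2 = 0
    · simp only [if_pos h0, if_pos h0]
    · rw [if_neg h0]
      have : p.1 + 1 ≠ 0 := by omega
      simp only [if_neg this]
      ext <;> simp <;> omega


private lemma Ggamma (f : P) (N : ℕ) (hf : ∀ k, N ≤ k → pderiv k f = 0) (c : ℕ) (hc : 2*N+4 ≤ c) :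
    (∑ i ∈ range (c+1), ∑ j ∈ range (c+1),
      if 1 ≤ i ∧ 1 ≤ j ∧ 1 ≤ i + j - 2 then
        ((i + j - 2 : ℕ) : ℚ) • (X i * X j * (((i + j - 2 - 1 : ℕ) : ℚ) • pderiv (i + j - 2 - 1) f))
      else 0)
    = (∑ m ∈ range c, (m:ℚ) • (X (m+1) * ∑ j ∈ range (c+1),
        if 1 ≤ m ∧ 1 ≤ j ∧ 1 ≤ m + j - 2 then
          ((m + j - 2 : ℕ) : ℚ) • (X j * pderiv (m + j - 2) f) else 0))
      + ∑ m ∈ range c, (m:ℚ) • (X (m+1) * ∑ i ∈ range (c+1),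
        if 1 ≤ i ∧ 1 ≤ m ∧ 1 ≤ i + m - 2 then
          ((i + m - 2 : ℕ) : ℚ) • (X i * pderiv (i + m - 2) f) else 0) := by
  -- notation for the two term families
  set a : ℕ → ℕ → P := fun i j =>
    if 1 ≤ i+1 ∧ 1 ≤ j ∧ 1 ≤ (i+1) + j - 2 then
      (((i+1) + j - 2 : ℕ) : ℚ) • (X (i+1) * X j * ((((i+1) + j - 2 - 1 : ℕ) : ℚ) •
        pderiv ((i+1) + j - 2 - 1) f))
    else 0 with ha
  set r : ℕ → ℕ → P := fun i j =>
    if 1 ≤ i ∧ 1 ≤ j ∧ 1 ≤ i + j - 2 then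
      (i:ℚ) • (X (i+1) * (((i + j - 2 : ℕ) : ℚ) • (X j * pderiv (i + j - 2) f)))
    else 0 with hr
  -- Step 1 : LHS = ∑_{i<c} ∑_{j<c+1} a i j  (shift the outer index)
  have hL : (∑ i ∈ range (c+1), ∑ j ∈ range (c+1),
      if 1 ≤ i ∧ 1 ≤ j ∧ 1 ≤ i + j - 2 then
        ((i + j - 2 : ℕ) : ℚ) • (X i * X j * (((i + j - 2 - 1 : ℕ) : ℚ) • pderiv (i + j - 2 - 1) f))
      else 0) = ∑ i ∈ range c, ∑ j ∈ range (c+1), a i j := by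
    rw [Finset.sum_range_succ' (fun i => ∑ j ∈ range (c+1),
      if 1 ≤ i ∧ 1 ≤ j ∧ 1 ≤ i + j - 2 then
        ((i + j - 2 : ℕ) : ℚ) • (X i * X j * (((i + j - 2 - 1 : ℕ) : ℚ) • pderiv (i + j - 2 - 1) f))
      else 0) c]
    have hz : (∑ j ∈ range (c+1),
        if 1 ≤ 0 ∧ 1 ≤ j ∧ 1 ≤ 0 + j - 2 then
          ((0 + j - 2 : ℕ) : ℚ) • (X 0 * X j * (((0 + j - 2 - 1 : ℕ) : ℚ) • pderiv (0 + j - 2 - 1) f))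
        else 0) = 0 := by
      apply Finset.sum_eq_zero; intro j _
      rw [if_neg (fun h => by omega)]
    rw [hz, add_zero]
  -- Step 2 : first RHS sum = ∑_{m<c} ∑_{j<c+1} r m j
  have hR1 : (∑ m ∈ range c, (m:ℚ) • (X (m+1) * ∑ j ∈ range (c+1),
        if 1 ≤ m ∧ 1 ≤ j ∧ 1 ≤ m + j - 2 then
          ((m + j - 2 : ℕ) : ℚ) • (X j * pderiv (m + j - 2) f) else 0))
      = ∑ m ∈ range c, ∑ j ∈ range (c+1), r m j := by
    simp only [Finset.mul_sum, Finset.smul_sum, mul_ite, mul_zero, smul_ite, smul_zero]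
    rfl
  -- Step 3 : second RHS sum = ∑_{m<c} ∑_{j<c+1} r m j  too
  have hR2 : (∑ m ∈ range c, (m:ℚ) • (X (m+1) * ∑ i ∈ range (c+1),
        if 1 ≤ i ∧ 1 ≤ m ∧ 1 ≤ i + m - 2 then
          ((i + m - 2 : ℕ) : ℚ) • (X i * pderiv (i + m - 2) f) else 0))
      = ∑ m ∈ range c, ∑ j ∈ range (c+1), r m j := by
    simp only [Finset.mul_sum, Finset.smul_sum, mul_ite, mul_zero, smul_ite, smul_zero]
    apply Finset.sum_congr rfl; intro m _
    apply Finset.sum_congr rfl; intro j _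
    rw [hr]
    simp only
    rw [show j + m - 2 = m + j - 2 from by omega]
    exact if_congr (by tauto) rfl rfl
  rw [hL, hR1, hR2]
  -- Step 4 : reduce to a vanishing sum over the product set
  have key : ∑ p ∈ range c ×ˢ range (c+1), (a p.1 p.2 - (r p.1 p.2 + r p.1 p.2)) = 0 :=
    keyinv f N hf c hc a r ha hr
  rw [Finset.sum_product' (f := fun i j => a i j - (r i j + r i j))] at key
  simp only [Finset.sum_sub_distrib, Finset.sum_add_distrib] at key
  linear_combination key


private lemma Gdelta (f : P) (N : ℕ) (hf : ∀ k, N ≤ k → pderiv k f = 0) (c : ℕ) (hc : 2*N+4 ≤ c) :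
    (∑ i ∈ range (c+1), ∑ j ∈ range (c+1),
      ((i:ℚ)*(j:ℚ)) • (X (i+j+2) * (((j-1:ℕ):ℚ) • pderiv i (pderiv (j-1) f))))
    + (∑ i ∈ range (c+1), ∑ j ∈ range (c+1),
      ((i:ℚ)*(j:ℚ)) • (X (i+j+2) * (((i-1:ℕ):ℚ) • pderiv j (pderiv (i-1) f))))
    = ∑ m ∈ range c, (m:ℚ) • (X (m+1) * ∑ i ∈ range (c+1), ∑ j ∈ range (c+1),
        if i+j+2 = m then ((i:ℚ)*(j:ℚ)) • pderiv i (pderiv j f) else 0) := by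
  -- RHS: push in and collapse the m-sum
  have hrhs : ∑ m ∈ range c, (m:ℚ) • (X (m+1) * ∑ i ∈ range (c+1), ∑ j ∈ range (c+1),
        if i+j+2 = m then ((i:ℚ)*(j:ℚ)) • pderiv i (pderiv j f) else 0)
      = ∑ i ∈ range (c+1), ∑ j ∈ range (c+1),
          (if i+j+2 ∈ range c then
            ((i+j+2 : ℕ):ℚ) • (X (i+j+3) * (((i:ℚ)*(j:ℚ)) • pderiv i (pderiv j f))) else 0) := by
    simp only [Finset.mul_sum, Finset.smul_sum, mul_ite, mul_zero, smul_ite, smul_zero]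
    rw [Finset.sum_comm]
    apply Finset.sum_congr rfl; intro i _
    rw [Finset.sum_comm]
    apply Finset.sum_congr rfl; intro j _
    rw [Finset.sum_ite_eq (range c) (i+j+2)
      (fun m => (m:ℚ) • (X (m+1) * (((i:ℚ)*(j:ℚ)) • pderiv i (pderiv j f))))]
  rw [hrhs]
  -- LHS first summand : shift j by one
  have h1 : ∀ i ∈ range (c+1), (∑ j ∈ range (c+1),
        ((i:ℚ)*(j:ℚ)) • (X (i+j+2) * (((j-1:ℕ):ℚ) • pderiv i (pderiv (j-1) f))))
      = ∑ j ∈ range (c+1),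
        ((i:ℚ)*((j:ℚ)+1)) • (X (i+j+3) * ((j:ℚ) • pderiv i (pderiv j f))) := by
    intro i _
    rw [Finset.sum_range_succ' (fun j => ((i:ℚ)*(j:ℚ)) • (X (i+j+2) * (((j-1:ℕ):ℚ) • pderiv i (pderiv (j-1) f)))) c]
    rw [Finset.sum_range_succ (fun j => ((i:ℚ)*((j:ℚ)+1)) • (X (i+j+3) * ((j:ℚ) • pderiv i (pderiv j f)))) c]
    have hz1 : ((i:ℚ)*((0:ℕ):ℚ)) • (X (i+0+2) * (((0-1:ℕ):ℚ) • pderiv i (pderiv (0-1) f))) = 0 := by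
      norm_num
    have hz2 : ((i:ℚ)*((c:ℚ)+1)) • (X (i+c+3) * ((c:ℚ) • pderiv i (pderiv c f))) = 0 := by
      rw [hf c (by omega)]
      simp
    rw [hz1, hz2, add_zero, add_zero]
    apply Finset.sum_congr rfl; intro j _
    rw [show i+(j+1)+2 = i+j+3 from by omega, show (j+1)-1 = j from by omega]
    push_cast
    ring_nf
  -- LHS second summand : shift i by one
  have h2 : (∑ i ∈ range (c+1), ∑ j ∈ range (c+1),
      ((i:ℚ)*(j:ℚ)) • (X (i+j+2) * (((i-1:ℕ):ℚ) • pderiv j (pderiv (i-1) f))))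
      = ∑ i ∈ range (c+1), ∑ j ∈ range (c+1),
        (((i:ℚ)+1)*(j:ℚ)) • (X (i+j+3) * ((i:ℚ) • pderiv j (pderiv i f))) := by
    rw [Finset.sum_range_succ' (fun i => ∑ j ∈ range (c+1),
      ((i:ℚ)*(j:ℚ)) • (X (i+j+2) * (((i-1:ℕ):ℚ) • pderiv j (pderiv (i-1) f)))) c]
    rw [Finset.sum_range_succ (fun i => ∑ j ∈ range (c+1),
      (((i:ℚ)+1)*(j:ℚ)) • (X (i+j+3) * ((i:ℚ) • pderiv j (pderiv i f)))) c]
    have hz1 : (∑ j ∈ range (c+1),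
        (((0:ℕ):ℚ)*(j:ℚ)) • (X (0+j+2) * (((0-1:ℕ):ℚ) • pderiv j (pderiv (0-1) f)))) = 0 := by
      apply Finset.sum_eq_zero; intro j _; norm_num
    have hz2 : (∑ j ∈ range (c+1),
        (((c:ℚ)+1)*(j:ℚ)) • (X (c+j+3) * ((c:ℚ) • pderiv j (pderiv c f)))) = 0 := by
      apply Finset.sum_eq_zero; intro j _
      rw [hf c (by omega)]
      simp
    rw [hz1, hz2, add_zero, add_zero]
    apply Finset.sum_congr rfl; intro i _
    apply Finset.sum_congr rfl; intro j _
    rw [show (i+1)+j+2 = i+j+3 from by omega, show (i+1)-1 = i from by omega]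
    push_cast
    ring_nf
  rw [Finset.sum_congr rfl h1, h2, ← Finset.sum_add_distrib]
  apply Finset.sum_congr rfl; intro i hi
  rw [← Finset.sum_add_distrib]
  apply Finset.sum_congr rfl; intro j hj
  simp only [mem_range] at hi hj
  by_cases hm : i+j+2 ∈ range c
  · rw [if_pos hm]
    rw [pd_comm j i f]
    simp only [smul_smul, mul_smul_comm]
    rw [← add_smul]
    exact smul_congr (by push_cast; ring) (by ring)
  · rw [if_neg hm]
    simp only [mem_range, not_lt] at hm
    -- i + j + 2 ≥ c, so one of i, j is ≥ N
    rcases le_or_gt N i with hNi | hNi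
    · rw [pd_comm i j f, hf i hNi]
      simp only [map_zero, smul_zero, mul_zero, add_zero, zero_add]
    · rw [pd_comm j i f, hf j (by omega)]
      simp only [map_zero, smul_zero, mul_zero, add_zero, zero_add]


private lemma Galpha (f : P) (N : ℕ) (hf : ∀ k, N ≤ k → pderiv k f = 0) (c : ℕ) (hc : 2*N+4 ≤ c) :
    (∑ i ∈ range (c+1), ∑ j ∈ range (c+1),
      if 1 ≤ i ∧ 1 ≤ j ∧ 1 ≤ i + j - 2 then
        ((i + j - 2 : ℕ) : ℚ) • (X i * X j *
          ∑ m ∈ range c, (m:ℚ) • (X (m+1) * pderiv (i+j-2) (pderiv m f)))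
      else 0)
    = ∑ m ∈ range c, (m:ℚ) • (X (m+1) * ∑ i ∈ range (c+1), ∑ j ∈ range (c+1),
        if 1 ≤ i ∧ 1 ≤ j ∧ 1 ≤ i + j - 2 then
          ((i + j - 2 : ℕ) : ℚ) • (X i * X j * pderiv m (pderiv (i + j - 2) f)) else 0) := by
  simp only [Finset.mul_sum, Finset.smul_sum, ite_sum, mul_ite, mul_zero, smul_ite, smul_zero]
  conv_rhs => rw [Finset.sum_comm]
  apply Finset.sum_congr rfl; intro i _
  conv_rhs => rw [Finset.sum_comm]
  apply Finset.sum_congr rfl; intro j _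
  apply Finset.sum_congr rfl; intro m _
  split_ifs with h
  · rw [pd_comm (i+j-2) m f]
    simp only [mul_smul_comm, smul_smul]
    exact smul_congr (by ring) (by ring)
  · rfl

private lemma Gbeta (f : P) (N : ℕ) (hf : ∀ k, N ≤ k → pderiv k f = 0) (c : ℕ) (hc : 2*N+4 ≤ c) :
    (∑ i ∈ range (c+1), ∑ j ∈ range (c+1),
      ((i:ℚ)*(j:ℚ)) • (X (i+j+2) *
        ∑ m ∈ range c, (m:ℚ) • (X (m+1) * pderiv i (pderiv j (pderiv m f)))))
    = ∑ m ∈ range c, (m:ℚ) • (X (m+1) * ∑ i ∈ range (c+1), ∑ j ∈ range (c+1),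
        ((i:ℚ)*(j:ℚ)) • (X (i+j+2) * pderiv m (pderiv i (pderiv j f)))) := by
  simp only [Finset.mul_sum, Finset.smul_sum]
  conv_rhs => rw [Finset.sum_comm]
  apply Finset.sum_congr rfl; intro i _
  conv_rhs => rw [Finset.sum_comm]
  apply Finset.sum_congr rfl; intro j _
  apply Finset.sum_congr rfl; intro m _
  rw [pd_comm j m f, pd_comm i m (pderiv j f)]
  simp only [mul_smul_comm, smul_smul]
  exact smul_congr (by ring) (by ring)


/-- [M₂, Λ₁] = 0: the operators M₂ and Λ₁ commute on ℚ[q₁, q₂, …]. -/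
theorem commutator_M2_Lam1 :
    ∀ f : MvPolynomial ℕ ℚ, M 2 (Lam1 f) - Lam1 (M 2 f) = 0 := by
  intro f
  obtain ⟨N, hf⟩ := exists_bound f
  set c := 2*N+4 with hcdef
  have hc : 2*N+4 ≤ c := le_refl _
  rw [M_eq (Lam1 f) c (Ld_vanish f N hf c hc), lam1_eq (M 2 f) c (Md_vanish f N hf c hc)]
  have hR : ∀ m ∈ range c, (m:ℚ) • (X (m+1) * pderiv m (M 2 f))
      = (1/2:ℚ) • ((m:ℚ) • (X (m+1) *
        ((∑ j ∈ range (c+1), if 1 ≤ m ∧ 1 ≤ j ∧ 1 ≤ m + j - 2 then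
            ((m + j - 2 : ℕ) : ℚ) • (X j * pderiv (m + j - 2) f) else 0)
        + (∑ i ∈ range (c+1), if 1 ≤ i ∧ 1 ≤ m ∧ 1 ≤ i + m - 2 then
            ((i + m - 2 : ℕ) : ℚ) • (X i * pderiv (i + m - 2) f) else 0)
        + (∑ i ∈ range (c+1), ∑ j ∈ range (c+1),
            if 1 ≤ i ∧ 1 ≤ j ∧ 1 ≤ i + j - 2 then
              ((i + j - 2 : ℕ) : ℚ) • (X i * X j * pderiv m (pderiv (i + j - 2) f)) else 0)
        + ((∑ i ∈ range (c+1), ∑ j ∈ range (c+1),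
            if i+j+2 = m then ((i:ℚ)*(j:ℚ)) • pderiv i (pderiv j f) else 0)
          + ∑ i ∈ range (c+1), ∑ j ∈ range (c+1),
            ((i:ℚ)*(j:ℚ)) • (X (i+j+2) * pderiv m (pderiv i (pderiv j f))))))) := by
    intro m hm
    rw [M_eq f c (fun t ht => hf t (by omega)), Derivation.map_smul, map_add,
        keyDA f c m (mem_range.mp hm), keyDB f c m, add_assoc]
    rw [mul_smul_comm, smul_comm (m:ℚ) (1/2:ℚ)]
  rw [Finset.sum_congr rfl hR, ← Finset.smul_sum, ← smul_sub]
  convert smul_zero ((1/2 : ℚ)) using 2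
  rw [sub_eq_zero]
  simp only [key2 f N hf c (by omega)]
  simp only [key1 f N hf c (by omega)]
  simp only [mul_add, smul_add, iteAddZero, Finset.sum_add_distrib]
  linear_combination (Ggamma f N hf c hc) + (Galpha f N hf c hc)
    + (Gdelta f N hf c hc) + (Gbeta f N hf c hc)
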